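/- In the directed model with k = ∞, if G has no removable edge and has at least one addable edge, then G has a strongly connected component containing at least c vertices. -/

import Mathlib

open Relation

variable {V : Type*} [Fintype V] [DecidableEq V]

/-- Add a directed edge `u → v`. -/
def addE (G : V → V → Prop) (u v : V) : V → V → Prop :=
  fun a b => G a b ∨ (a = u ∧ b = v)

/-- Delete the directed edge `u → v`. -/
def delE (G : V → V → Prop) (u v : V) : V → V → Prop :=
  fun a b => G a b ∧ ¬(a = u ∧ b = v)

/-- Vertices other than `v` reachable from `v` (k = ∞). -/
def reachSet (G : V → V → Prop) (v : V) : Set V :=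
  {w | w ≠ v ∧ ReflTransGen G v w}

/-- Out-degree of `v`. -/
noncomputable def outdeg (G : V → V → Prop) (v : V) : ℕ :=
  {w | G v w}.ncard

/-- Utility of agent `v`: reachable vertices minus `c` per out-edge. -/
noncomputable def util (G : V → V → Prop) (c : ℝ) (v : V) : ℝ :=
  ((reachSet G v).ncard : ℝ) - c * (outdeg G v : ℝ)

/-- `u → v` is addable: it is absent and adding it strictly increases `u`'s utility. -/
def Addable (G : V → V → Prop) (c : ℝ) (u v : V) : Prop :=
  ¬ G u v ∧ util G c u < util (addE G u v) c u

/-- `u → v` is removable: it is present and deleting it strictly increases `u`'s utility. -/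
def Removable (G : V → V → Prop) (c : ℝ) (u v : V) : Prop :=
  G u v ∧ util G c u < util (delE G u v) c u

/-- `u` and `v` lie in the same strongly connected component. -/
def SameSCC (G : V → V → Prop) (u v : V) : Prop :=
  ReflTransGen G u v ∧ ReflTransGen G v u

/-- The strongly connected component of `v`. -/
def scc (G : V → V → Prop) (v : V) : Set V := {w | SameSCC G v w}

/-- The reachability closure of `w` (including `w` itself). -/
def closS (G : V → V → Prop) (w : V) : Set V := {x | ReflTransGen G w x}

lemma delE_reach {G : V → V → Prop} {a b z : V} (h : ReflTransGen G a z) :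
    ReflTransGen (delE G a b) a z ∨ ReflTransGen G b z := by
  induction h with
  | refl => exact Or.inl ReflTransGen.refl
  | @tail y z hay hyz ih =>
    rcases ih with ih | ih
    · by_cases hcase : y = a ∧ z = b
      · exact Or.inr (hcase.2 ▸ ReflTransGen.refl)
      · exact Or.inl (ih.tail ⟨hyz, hcase⟩)
    · exact Or.inr (ih.tail hyz)

lemma addE_reach {G : V → V → Prop} {u v x z : V} (h : ReflTransGen (addE G u v) x z) :
    ReflTransGen G x z ∨ ReflTransGen G v z := by
  induction h with
  | refl => exact Or.inl ReflTransGen.refl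
  | @tail y z hxy hyz ih =>
    rcases hyz with hG | ⟨rfl, rfl⟩
    · rcases ih with ih | ih
      · exact Or.inl (ih.tail hG)
      · exact Or.inr (ih.tail hG)
    · exact Or.inr ReflTransGen.refl

/-- If an edge into `b` is not removable, then the closure of `b` has at least `c` vertices. -/
lemma clos_card_of_edge {G : V → V → Prop} {c : ℝ}
    (hnorem : ∀ u v, ¬ Removable G c u v)
    {a b : V} (hab : G a b) : c ≤ ((closS G b).ncard : ℝ) := by
  have hle : util (delE G a b) c a ≤ util G c a := by
    by_contra h
    exact hnorem a b ⟨hab, lt_of_not_ge h⟩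
  have hout : {w | delE G a b a w} = {w | G a w} \ {b} := by
    ext w
    simp only [delE, Set.mem_setOf_eq, Set.mem_diff, Set.mem_singleton_iff]
    tauto
  have hbmem : b ∈ {w | G a w} := hab
  have hod : outdeg (delE G a b) a + 1 = outdeg G a := by
    rw [outdeg, outdeg, hout]
    exact Set.ncard_diff_singleton_add_one hbmem
  have hsub : reachSet (delE G a b) a ⊆ reachSet G a := by
    intro z hz
    exact ⟨hz.1, ReflTransGen.mono (r := delE G a b) (p := G) (fun _ _ h => h.1) _ _ hz.2⟩
  have hcard : c ≤ ((reachSet G a).ncard : ℝ) - ((reachSet (delE G a b) a).ncard : ℝ) := by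
    have h := hle
    rw [util, util, ← hod] at h
    push_cast at h
    linarith
  have hL : reachSet G a \ reachSet (delE G a b) a ⊆ closS G b := by
    rintro z ⟨⟨hz1, hz2⟩, hz3⟩
    rcases delE_reach (b := b) hz2 with h | h
    · exact absurd ⟨hz1, h⟩ hz3
    · exact h
  have h2 : (reachSet (delE G a b) a).ncard ≤ (reachSet G a).ncard :=
    Set.ncard_le_ncard hsub (Set.toFinite _)
  have h1 : (reachSet G a \ reachSet (delE G a b) a).ncard
      = (reachSet G a).ncard - (reachSet (delE G a b) a).ncard :=
    Set.ncard_diff hsub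
  have h3 : ((reachSet G a \ reachSet (delE G a b) a).ncard : ℝ)
      = ((reachSet G a).ncard : ℝ) - ((reachSet (delE G a b) a).ncard : ℝ) := by
    rw [h1, Nat.cast_sub h2]
  have h4 : (reachSet G a \ reachSet (delE G a b) a).ncard ≤ (closS G b).ncard :=
    Set.ncard_le_ncard hL (Set.toFinite _)
  calc c ≤ ((reachSet G a).ncard : ℝ) - ((reachSet (delE G a b) a).ncard : ℝ) := hcard
    _ = ((reachSet G a \ reachSet (delE G a b) a).ncard : ℝ) := h3.symm
    _ ≤ ((closS G b).ncard : ℝ) := by exact_mod_cast h4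

/-- Along a path from `w` to a vertex not reaching back `w`, there is a crossing edge. -/
lemma crossing {G : V → V → Prop} {w x : V} (hx : ReflTransGen G w x)
    (hnb : ¬ ReflTransGen G x w) :
    ∃ a b, G a b ∧ ReflTransGen G w b ∧ ¬ ReflTransGen G b w := by
  induction hx with
  | refl => exact absurd ReflTransGen.refl hnb
  | @tail y z hwy hyz ih =>
    by_cases hy : ReflTransGen G y w
    · exact ⟨y, z, hyz, hwy.tail hyz, hnb⟩
    · obtain ⟨a, b, h1, h2, h3⟩ := ih hy
      exact ⟨a, b, h1, h2, h3⟩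

/-- If `G` has no removable edge and at least one addable edge, then `G` has a strongly
connected component containing at least `c` vertices. -/
theorem stmt5 (G : V → V → Prop) (c : ℝ) (hc : 0 < c)
    (hnorem : ∀ u v, ¬ Removable G c u v)
    (hadd : ∃ u v, Addable G c u v) :
    ∃ v : V, c ≤ ((scc G v).ncard : ℝ) := by
  classical
  obtain ⟨u, v, hnuv, hutil⟩ := hadd
  by_cases hc1 : c ≤ 1
  · refine ⟨u, ?_⟩
    have hmem : u ∈ scc G u := ⟨ReflTransGen.refl, ReflTransGen.refl⟩
    have hpos : 0 < (scc G u).ncard :=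
      (Set.ncard_pos (Set.toFinite _)).2 ⟨u, hmem⟩
    have : (1 : ℝ) ≤ ((scc G u).ncard : ℝ) := by exact_mod_cast hpos
    linarith
  push_neg at hc1
  -- step 1: u's reach set grows by more than c > 1, so some z ≠ v is reachable from v
  have hout : outdeg (addE G u v) u = outdeg G u + 1 := by
    have hset : {w | addE G u v u w} = insert v {w | G u w} := by
      ext w
      simp only [addE, Set.mem_setOf_eq, Set.mem_insert_iff]
      tauto
    rw [outdeg, outdeg, hset]
    exact Set.ncard_insert_of_notMem hnuv
  have hsub : reachSet G u ⊆ reachSet (addE G u v) u := fun z hz =>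
    ⟨hz.1, ReflTransGen.mono (r := G) (p := addE G u v) (fun a b h => Or.inl h) _ _ hz.2⟩
  have hgain : ((reachSet G u).ncard : ℝ) + 1 < ((reachSet (addE G u v) u).ncard : ℝ) := by
    rw [util, util, hout] at hutil
    push_cast at hutil
    linarith
  have hgain2 : (reachSet G u).ncard + 1 < (reachSet (addE G u v) u).ncard := by
    exact_mod_cast hgain
  have hle : (reachSet G u).ncard ≤ (reachSet (addE G u v) u).ncard :=
    Set.ncard_le_ncard hsub (Set.toFinite _)
  have hdiff : 1 < (reachSet (addE G u v) u \ reachSet G u).ncard := by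
    rw [Set.ncard_diff hsub]
    omega
  obtain ⟨z1, z2, hz1, hz2, hz12⟩ :=
    (Set.one_lt_ncard_iff (Set.toFinite _)).1 hdiff
  have hzex : ∃ z, z ∈ reachSet (addE G u v) u \ reachSet G u ∧ z ≠ v := by
    rcases eq_or_ne z1 v with rfl | h
    · exact ⟨z2, hz2, fun h => hz12 h.symm⟩
    · exact ⟨z1, hz1, h⟩
  obtain ⟨z, ⟨⟨hzu, hzr⟩, hznr⟩, hzv⟩ := hzex
  have hvz : ReflTransGen G v z := by
    rcases addE_reach hzr with h | h
    · exact absurd ⟨hzu, h⟩ hznr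
    · exact h
  obtain ⟨b0, hb0, -⟩ : ∃ b0, G v b0 ∧ ReflTransGen G b0 z := by
    rcases hvz.cases_head with rfl | ⟨b0, h1, h2⟩
    · exact absurd rfl hzv
    · exact ⟨b0, h1, h2⟩
  -- step 2: pick w with minimal closure among vertices with closure ≥ c
  have hb0c : c ≤ ((closS G b0).ncard : ℝ) := clos_card_of_edge hnorem hb0
  set Wfin : Finset V := Finset.univ.filter (fun w => c ≤ ((closS G w).ncard : ℝ)) with hWfin
  have hb0W : b0 ∈ Wfin := by simp [hWfin, hb0c]
  obtain ⟨w, hwW, hwmin⟩ :=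
    Wfin.exists_min_image (fun w => (closS G w).ncard) ⟨b0, hb0W⟩
  have hwc : c ≤ ((closS G w).ncard : ℝ) := by
    simpa [hWfin] using hwW
  refine ⟨w, ?_⟩
  by_contra hcon
  push_neg at hcon
  -- scc G w ⊊ closS G w, get a crossing edge
  have hsccsub : scc G w ⊆ closS G w := fun x hx => hx.1
  have hltn : (scc G w).ncard < (closS G w).ncard := by
    have : ((scc G w).ncard : ℝ) < ((closS G w).ncard : ℝ) := lt_of_lt_of_le hcon hwc
    exact_mod_cast this
  have hne : scc G w ≠ closS G w := by
    intro h
    rw [h] at hltn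
    exact lt_irrefl _ hltn
  obtain ⟨x, hxc, hxs⟩ := Set.exists_of_ssubset (ssubset_of_subset_of_ne hsccsub hne)
  have hxw : ¬ ReflTransGen G x w := fun h => hxs ⟨hxc, h⟩
  obtain ⟨a, b, hab, hwb, hnbw⟩ := crossing hxc hxw
  have hbc : c ≤ ((closS G b).ncard : ℝ) := clos_card_of_edge hnorem hab
  have hbW : b ∈ Wfin := by simp [hWfin, hbc]
  have hmin : (closS G w).ncard ≤ (closS G b).ncard := hwmin b hbW
  have hsub2 : closS G b ⊆ closS G w := fun y hy => hwb.trans hy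
  have heq : closS G b = closS G w :=
    Set.eq_of_subset_of_ncard_le hsub2 hmin (Set.toFinite _)
  have : ReflTransGen G b w := by
    have hw : w ∈ closS G w := ReflTransGen.refl
    rw [← heq] at hw
    exact hw
  exact hnbw this
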